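/- The function d on (ℕ_{≥1} × ℕ_{≥1}) × (ℕ_{≥1} × ℕ_{≥1}) defined by d((n,m),(n',m')) = 0 if n = n' and m = m'; 0 if n = n', min{m,m'} = 1 and max{m,m'} > n; 0 if n = n' and min{m,m'} > n; 2^{−n} if n = n' and none of the previous cases hold; and 2·∑_{k=min{n,n'}}^{max{n,n'}} k^{−2} if n ≠ n', is a pseudometric: it is symmetric, vanishes on the diagonal, and satisfies the triangle inequality d((n,m),(n'',m'')) ≤ d((n,m),(n',m')) + d((n',m'),(n'',m'')) for all points. -/

import Mathlib

open Finset

/-- The distance function on `ℕ≥1 × ℕ≥1` from the paper: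
`d((n,m),(n',m')) = 0` if `n = n'` and `m = m'`; `0` if `n = n'`, `min{m,m'} = 1` and
`max{m,m'} > n`; `0` if `n = n'` and `min{m,m'} > n`; `2^{-n}` if `n = n'` and none of the
previous cases hold; and `2·∑_{k=min{n,n'}}^{max{n,n'}} k^{-2}` if `n ≠ n'`. -/
noncomputable def starExDist (p q : ℕ+ × ℕ+) : ℝ :=
  if p.1 = q.1 then
    if p.2 = q.2 then 0
    else if min p.2 q.2 = 1 ∧ (p.1 : ℕ) < (max p.2 q.2 : ℕ) then 0
    else if (p.1 : ℕ) < (min p.2 q.2 : ℕ) then 0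
    else (1 / 2 : ℝ) ^ (p.1 : ℕ)
  else 2 * ∑ k ∈ Finset.Icc ((min p.1 q.1 : ℕ+) : ℕ) ((max p.1 q.1 : ℕ+) : ℕ), ((k : ℝ) ^ 2)⁻¹

lemma starExDist_nonneg' (p q : ℕ+ × ℕ+) : 0 ≤ starExDist p q := by
  unfold starExDist
  split_ifs <;> positivity

lemma starExDist_same (n m m' : ℕ+) :
    starExDist (n, m) (n, m') =
      if m = m' then 0
      else if min m m' = 1 ∧ (n : ℕ) < ((max m m' : ℕ+) : ℕ) then 0
      else if (n : ℕ) < ((min m m' : ℕ+) : ℕ) then 0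
      else (1 / 2 : ℝ) ^ (n : ℕ) := if_pos rfl

lemma starExDist_ne (n n' m m' : ℕ+) (h : n ≠ n') :
    starExDist (n, m) (n', m') =
      2 * ∑ k ∈ Finset.Icc (min (n:ℕ) (n':ℕ)) (max (n:ℕ) (n':ℕ)), ((k : ℝ) ^ 2)⁻¹ :=
  if_neg h

/-- Characterization of zero distance when first coordinates coincide. -/
lemma starExDist_same_zero_iff (n m m' : ℕ+) :
    starExDist (n, m) (n, m') = 0 ↔
      m = m' ∨ (((m:ℕ) = 1 ∨ (n:ℕ) < (m:ℕ)) ∧ ((m':ℕ) = 1 ∨ (n:ℕ) < (m':ℕ))) := by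
  have h1 : (1:ℕ) ≤ (n:ℕ) := n.one_le
  have hm : (1:ℕ) ≤ (m:ℕ) := m.one_le
  have hm' : (1:ℕ) ≤ (m':ℕ) := m'.one_le
  have hmin : ((min m m' : ℕ+) : ℕ) = min (m:ℕ) (m':ℕ) := rfl
  have hmax : ((max m m' : ℕ+) : ℕ) = max (m:ℕ) (m':ℕ) := rfl
  have hpow : (0:ℝ) < (1/2:ℝ) ^ (n:ℕ) := by positivity
  have hmm : m = m' ↔ (m:ℕ) = (m':ℕ) := by
    exact ⟨fun h => by rw [h], fun h => PNat.coe_injective h⟩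
  have hone : min m m' = 1 ↔ min (m:ℕ) (m':ℕ) = 1 := by
    rw [← hmin]; exact ⟨fun h => by rw [h]; rfl, fun h => PNat.coe_injective h⟩
  rw [starExDist_same]
  split_ifs with h3 h4 h5
  · simp [h3]
  · have ha := hone.mp h4.1
    have hb := h4.2
    rw [hmax] at hb
    exact ⟨fun _ => Or.inr (by omega), fun _ => rfl⟩
  · have ha := h5
    rw [hmin] at ha
    exact ⟨fun _ => Or.inr (by omega), fun _ => rfl⟩
  · constructor
    · intro h; exact absurd h (ne_of_gt hpow)
    · intro h; exfalso
      rcases h with h | h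
      · exact h3 h
      obtain ⟨ha, hb⟩ := h
      have hne : (m:ℕ) ≠ (m':ℕ) := fun hh => h3 (PNat.coe_injective hh)
      have h4n : ¬(min (m:ℕ) (m':ℕ) = 1 ∧ (n:ℕ) < max (m:ℕ) (m':ℕ)) :=
        fun hx => h4 ⟨hone.mpr hx.1, by rw [hmax]; exact hx.2⟩
      have h5n : ¬((n:ℕ) < min (m:ℕ) (m':ℕ)) := fun hx => h5 (by rw [hmin]; exact hx)
      omega

/-- The distance is `0` or `2⁻ⁿ` when first coordinates coincide. -/
lemma starExDist_same_cases (n m m' : ℕ+) :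
    starExDist (n, m) (n, m') = 0 ∨ starExDist (n, m) (n, m') = (1/2:ℝ) ^ (n:ℕ) := by
  rw [starExDist_same]
  split_ifs <;> simp

lemma sq_le_two_pow (n : ℕ) : n ^ 2 ≤ 2 ^ (n + 2) := by
  induction n with
  | zero => norm_num
  | succ k ih =>
    have hk : k < 2 ^ k := Nat.lt_two_pow_self
    have e1 : (k+1)^2 = k^2 + (2*k + 1) := by ring
    have e2 : 2 ^ (k + 1 + 2) = 2 ^ (k+2) + 2 ^ (k+2) := by ring
    have h2 : 2*k + 1 ≤ 2 ^ (k+2) := by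
      have h3 : 2^(k+2) = 2^k + 2^k + 2^k + 2^k := by ring
      have h4 : 1 ≤ 2^k := Nat.one_le_two_pow
      omega
    omega

/-- Key estimate: `(1/2)^n ≤ 4 / n²` for `n ≥ 1`. -/
lemma half_pow_le (n : ℕ+) : (1/2:ℝ) ^ (n:ℕ) ≤ 4 * (((n:ℕ):ℝ) ^ 2)⁻¹ := by
  have hn : (0:ℝ) < ((n:ℕ):ℝ) := by exact_mod_cast n.pos
  have h2 : (0:ℝ) < 2 ^ (n:ℕ) := by positivity
  have hnat : ((n:ℕ):ℝ) ^ 2 ≤ 4 * 2 ^ (n:ℕ) := by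
    have h := sq_le_two_pow (n:ℕ)
    have h4 : (2:ℕ) ^ ((n:ℕ) + 2) = 4 * 2 ^ (n:ℕ) := by ring
    rw [h4] at h
    exact_mod_cast h
  have e1 : (1/2:ℝ)^(n:ℕ) = 1 / 2^(n:ℕ) := by rw [div_pow, one_pow]
  have e2 : 4 * (((n:ℕ):ℝ)^2)⁻¹ = 4 / ((n:ℕ):ℝ)^2 := by rw [div_eq_mul_inv]
  rw [e1, e2, div_le_div_iff₀ h2 (by positivity)]
  linarith

/-- Interval covering: `[min a c, max a c] ⊆ [min a b, max a b] ∪ [min b c, max b c]`. -/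
lemma icc_subset_union (a b c : ℕ) :
    Finset.Icc (min a c) (max a c) ⊆
      Finset.Icc (min a b) (max a b) ∪ Finset.Icc (min b c) (max b c) := by
  intro k hk
  simp only [Finset.mem_Icc, Finset.mem_union] at *
  omega

lemma sum_icc_triangle (a b c : ℕ) :
    ∑ k ∈ Finset.Icc (min a c) (max a c), ((k : ℝ) ^ 2)⁻¹ ≤
      (∑ k ∈ Finset.Icc (min a b) (max a b), ((k : ℝ) ^ 2)⁻¹) +
      ∑ k ∈ Finset.Icc (min b c) (max b c), ((k : ℝ) ^ 2)⁻¹ := by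
  set f : ℕ → ℝ := fun k => ((k : ℝ) ^ 2)⁻¹ with hf
  have hnn : ∀ k, 0 ≤ f k := fun k => by positivity
  calc ∑ k ∈ Finset.Icc (min a c) (max a c), f k
      ≤ ∑ k ∈ Finset.Icc (min a b) (max a b) ∪ Finset.Icc (min b c) (max b c), f k :=
        Finset.sum_le_sum_of_subset_of_nonneg (icc_subset_union a b c)
          (fun k _ _ => hnn k)
    _ ≤ (∑ k ∈ Finset.Icc (min a b) (max a b), f k) +
          ∑ k ∈ Finset.Icc (min b c) (max b c), f k := by
        have h := Finset.sum_union_inter (s₁ := Finset.Icc (min a b) (max a b))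
          (s₂ := Finset.Icc (min b c) (max b c)) (f := f)
        have hge : 0 ≤ ∑ k ∈ Finset.Icc (min a b) (max a b) ∩ Finset.Icc (min b c) (max b c),
            f k := Finset.sum_nonneg fun k _ => hnn k
        linarith

/-- A single term bounds the sum from below. -/
lemma single_le_sum_icc (n n' : ℕ+) :
    (((n:ℕ):ℝ) ^ 2)⁻¹ ≤
      ∑ k ∈ Finset.Icc (min (n:ℕ) (n':ℕ)) (max (n:ℕ) (n':ℕ)), ((k : ℝ) ^ 2)⁻¹ := by
  have hmem : (n:ℕ) ∈ Finset.Icc (min (n:ℕ) (n':ℕ)) (max (n:ℕ) (n':ℕ)) := by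
    simp only [Finset.mem_Icc]
    omega
  exact Finset.single_le_sum (f := fun k => (((k:ℕ):ℝ) ^ 2)⁻¹)
    (fun k _ => by positivity) hmem

/-- The function `starExDist` is a pseudometric on `ℕ≥1 × ℕ≥1`: it is
nonnegative, vanishes on the diagonal, is symmetric, and satisfies the triangle inequality. -/
theorem starExDist_pseudometric :
    (∀ p : ℕ+ × ℕ+, starExDist p p = 0) ∧
    (∀ p q : ℕ+ × ℕ+, 0 ≤ starExDist p q) ∧
    (∀ p q : ℕ+ × ℕ+, starExDist p q = starExDist q p) ∧
    (∀ p q r : ℕ+ × ℕ+, starExDist p r ≤ starExDist p q + starExDist q r) := by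
  refine ⟨?_, starExDist_nonneg', ?_, ?_⟩
  · intro ⟨n, m⟩
    rw [starExDist_same]
    simp
  · -- symmetry
    intro ⟨n, m⟩ ⟨n', m'⟩
    by_cases h : n = n'
    · subst h
      rw [starExDist_same, starExDist_same, min_comm m' m, max_comm m' m]
      by_cases hm : m = m'
      · simp [hm]
      · have hm2 : m' ≠ m := fun h' => hm h'.symm
        rw [if_neg hm, if_neg hm2]
    · rw [starExDist_ne n n' m m' h, starExDist_ne n' n m' m (fun h' => h h'.symm),
        min_comm (n':ℕ) (n:ℕ), max_comm (n':ℕ) (n:ℕ)]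
  · -- triangle inequality
    intro ⟨n1, m1⟩ ⟨n2, m2⟩ ⟨n3, m3⟩
    by_cases h12 : n1 = n2
    · subst h12
      by_cases h13 : n1 = n3
      · -- all equal
        subst h13
        rcases starExDist_same_cases n1 m1 m3 with h | h
        · rw [h]
          exact add_nonneg (starExDist_nonneg' _ _) (starExDist_nonneg' _ _)
        · rcases starExDist_same_cases n1 m1 m2 with h1 | h1
          · rcases starExDist_same_cases n1 m2 m3 with h2 | h2
            · -- both zero: contradiction via transitivity
              exfalso
              rw [starExDist_same_zero_iff] at h1 h2
              have h0 : starExDist (n1, m1) (n1, m3) = 0 := by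
                rw [starExDist_same_zero_iff]
                rcases h1 with h1 | ⟨ha, hb⟩
                · subst h1; exact h2
                · rcases h2 with h2 | ⟨hc, hd⟩
                  · subst h2; right; exact ⟨ha, hb⟩
                  · right; exact ⟨ha, hd⟩
              rw [h0] at h
              have : (0:ℝ) < (1/2:ℝ) ^ (n1:ℕ) := by positivity
              linarith
            · rw [h, h1, h2]
              have := starExDist_nonneg' ((n1, m1) : ℕ+ × ℕ+) ((n1, m2) : ℕ+ × ℕ+)
              linarith
          · rw [h, h1]
            have := starExDist_nonneg' ((n1, m2) : ℕ+ × ℕ+) ((n1, m3) : ℕ+ × ℕ+)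
            linarith
      · -- n1 = n2 ≠ n3 : d(p,r) = d(q,r)
        rw [starExDist_ne n1 n3 m1 m3 h13, starExDist_ne n1 n3 m2 m3 h13]
        have := starExDist_nonneg' ((n1, m1) : ℕ+ × ℕ+) ((n1, m2) : ℕ+ × ℕ+)
        linarith
    · by_cases h23 : n2 = n3
      · -- n2 = n3 ≠ n1 : d(p,r) = d(p,q)
        subst h23
        rw [starExDist_ne n1 n2 m1 m3 h12, starExDist_ne n1 n2 m1 m2 h12]
        have := starExDist_nonneg' ((n2, m2) : ℕ+ × ℕ+) ((n2, m3) : ℕ+ × ℕ+)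
        linarith
      · by_cases h13 : n1 = n3
        · -- n1 = n3 ≠ n2
          subst h13
          rw [starExDist_ne n1 n2 m1 m2 h12, starExDist_ne n2 n1 m2 m3 (fun h => h12 h.symm)]
          have hsum := single_le_sum_icc n1 n2
          have hkey := half_pow_le n1
          have hLHS : starExDist (n1, m1) (n1, m3) ≤ (1/2:ℝ) ^ (n1:ℕ) := by
            rcases starExDist_same_cases n1 m1 m3 with h | h
            · rw [h]; positivity
            · rw [h]
          have hcomm : min (n2:ℕ) (n1:ℕ) = min (n1:ℕ) (n2:ℕ) := min_comm _ _
          have hcomm' : max (n2:ℕ) (n1:ℕ) = max (n1:ℕ) (n2:ℕ) := max_comm _ _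
          rw [hcomm, hcomm']
          have hn1 : (0:ℝ) < ((n1:ℕ):ℝ) := by exact_mod_cast n1.pos
          calc starExDist (n1, m1) (n1, m3) ≤ (1/2:ℝ) ^ (n1:ℕ) := hLHS
            _ ≤ 4 * ((((n1:ℕ)):ℝ) ^ 2)⁻¹ := hkey
            _ ≤ 4 * ∑ k ∈ Finset.Icc (min (n1:ℕ) (n2:ℕ)) (max (n1:ℕ) (n2:ℕ)),
                  ((k : ℝ) ^ 2)⁻¹ := by linarith
            _ = 2 * (∑ k ∈ Finset.Icc (min (n1:ℕ) (n2:ℕ)) (max (n1:ℕ) (n2:ℕ)),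
                  ((k : ℝ) ^ 2)⁻¹) + 2 * ∑ k ∈ Finset.Icc (min (n1:ℕ) (n2:ℕ))
                  (max (n1:ℕ) (n2:ℕ)), ((k : ℝ) ^ 2)⁻¹ := by ring
        · -- all distinct
          rw [starExDist_ne n1 n3 m1 m3 h13, starExDist_ne n1 n2 m1 m2 h12,
            starExDist_ne n2 n3 m2 m3 h23]
          have := sum_icc_triangle (n1:ℕ) (n2:ℕ) (n3:ℕ)
          linarith
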